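/- Let x, y : Fin r → ℝ be nonincreasing functions with x i ≥ 0 and y i ≥ 0 for all i. Then the partial-sum inequalities Σ_{i=1}^{k} x i ≤ Σ_{i=1}^{k} y i hold for every k with 1 ≤ k ≤ r if and only if there exists a doubly stochastic matrix S ∈ ℝ^{r×r} such that the entrywise inequalities x i ≤ (S.mulVec y) i hold for every i. -/

import Mathlib

open Finset Matrix

noncomputable section
namespace WMaj

/-- prefix sum of first `j` entries (zero-extended). -/
def psum {n : ℕ} (f : Fin n → ℝ) (j : ℕ) : ℝ :=
  ∑ i ∈ Finset.range j, if h : i < n then f ⟨i, h⟩ else 0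

lemma psum_eq_filter {n : ℕ} (f : Fin n → ℝ) (j : ℕ) :
    psum f j = ∑ i ∈ Finset.univ.filter (fun i : Fin n => (i : ℕ) < j), f i := by
  induction j with
  | zero =>
    simp [psum]
  | succ j ih =>
    rw [psum, Finset.sum_range_succ, ← psum, ih]
    by_cases h : j < n
    · have hins : (Finset.univ.filter (fun i : Fin n => (i : ℕ) < j + 1))
        = insert ⟨j, h⟩ (Finset.univ.filter (fun i : Fin n => (i : ℕ) < j)) := by
        ext i
        simp only [Finset.mem_insert, Finset.mem_filter, Finset.mem_univ, true_and, Fin.ext_iff]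
        omega
      rw [hins, Finset.sum_insert (by simp), dif_pos h]
      ring
    · have heq : (Finset.univ.filter (fun i : Fin n => (i : ℕ) < j + 1))
        = (Finset.univ.filter (fun i : Fin n => (i : ℕ) < j)) := by
        ext i
        simp only [Finset.mem_filter, Finset.mem_univ, true_and]
        have := i.2
        omega
      rw [heq, dif_neg h, add_zero]

lemma card_filter_lt {n : ℕ} {j : ℕ} (hj : j ≤ n) :
    (Finset.univ.filter (fun i : Fin n => (i : ℕ) < j)).card = j := by
  induction j with
  | zero => simp
  | succ j ih =>
    have h : j < n := by omega
    have hins : (Finset.univ.filter (fun i : Fin n => (i : ℕ) < j + 1))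
        = insert ⟨j, h⟩ (Finset.univ.filter (fun i : Fin n => (i : ℕ) < j)) := by
      ext i
      simp only [Finset.mem_insert, Finset.mem_filter, Finset.mem_univ, true_and, Fin.ext_iff]
      omega
    rw [hins, Finset.card_insert_of_notMem (by simp), ih (by omega)]

lemma psum_shift {n : ℕ} (z : Fin (n + 1) → ℝ) (j : ℕ) :
    psum z (j + 1) = z 0 + psum (fun i => z i.succ) j := by
  simp only [psum]
  rw [Finset.sum_range_succ']
  have h0 : (if h : 0 < n + 1 then z ⟨0, h⟩ else 0) = z 0 := by
    rw [dif_pos (by omega : 0 < n + 1)]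
    congr 1
  have hterm : ∀ i : ℕ, (if h : i + 1 < n + 1 then z ⟨i + 1, h⟩ else 0)
      = (if h : i < n then z ((⟨i, h⟩ : Fin n)).succ else 0) := by
    intro i; by_cases h : i < n
    · rw [dif_pos (by omega : i + 1 < n + 1), dif_pos h]
      rfl
    · rw [dif_neg (by omega : ¬ (i + 1 < n + 1)), dif_neg h]
  simp only [hterm, h0]
  exact add_comm _ _

lemma psum_one {n : ℕ} (f : Fin (n + 1) → ℝ) : psum f 1 = f 0 := by
  rw [psum]
  simp only [Finset.sum_range_one, dif_pos (by omega : 0 < n + 1)]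
  congr 1

lemma sum_castLE {n : ℕ} (f : Fin n → ℝ) {k : ℕ} (hk : k ≤ n) :
    ∑ i : Fin k, f (Fin.castLE hk i) = psum f k := by
  rw [psum, ← Fin.sum_univ_eq_sum_range (fun i => if h : i < n then f ⟨i, h⟩ else 0) k]
  refine Finset.sum_congr rfl fun i _ => ?_
  rw [dif_pos (lt_of_lt_of_le i.2 hk)]
  rfl

lemma le_apply_of_strictMono {j n : ℕ} {g : Fin j → Fin n} (hg : StrictMono g) (m : Fin j) :
    (m : ℕ) ≤ (g m : ℕ) := by
  have key : ∀ s : ℕ, ∀ m : Fin j, (m : ℕ) = s → s ≤ (g m : ℕ) := by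
    intro s
    induction s with
    | zero => intro m _; omega
    | succ s ih =>
      intro m hm
      have hs : s < j := by omega
      have h1 : s ≤ (g ⟨s, hs⟩ : ℕ) := by simpa using ih ⟨s, hs⟩ rfl
      have hlt : (⟨s, hs⟩ : Fin j) < m := by
        rw [Fin.lt_def]; simp only [Fin.val_mk]; omega
      have h2 := hg hlt
      rw [Fin.lt_def] at h2
      omega
  exact key _ m rfl

lemma sum_le_psum {n : ℕ} {v : Fin n → ℝ} (hv : Antitone v) (C : Finset (Fin n)) :
    ∑ i ∈ C, v i ≤ psum v C.card := by
  classical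
  have hjn : C.card ≤ n := by
    simpa using Finset.card_le_card (Finset.subset_univ C)
  set j := C.card with hj
  have e := C.orderIsoOfFin hj.symm
  have h1 : ∑ i ∈ C, v i = ∑ m : Fin j, v (e m) := by
    rw [← Finset.sum_coe_sort C v]
    exact (Equiv.sum_comp e.toEquiv (fun c => v c)).symm
  have hmono : StrictMono (fun m : Fin j => ((e m : Fin n))) := by
    intro a b hab
    exact e.strictMono hab
  rw [h1, psum, ← Fin.sum_univ_eq_sum_range (fun i => if h : i < n then v ⟨i, h⟩ else 0) j]
  refine Finset.sum_le_sum fun m _ => ?_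
  rw [dif_pos (lt_of_lt_of_le m.2 hjn)]
  exact hv (Fin.le_def.mpr (le_apply_of_strictMono hmono m))


lemma permMatrix_mulVec {n : ℕ} (σ : Equiv.Perm (Fin n)) (f : Fin n → ℝ) :
    (σ.permMatrix ℝ) *ᵥ f = fun i => f (σ i) := by
  ext i
  simp [Equiv.Perm.permMatrix, mulVec, dotProduct, PEquiv.toMatrix_apply, Equiv.toPEquiv_apply]

/-- Block extension of a doubly stochastic matrix by the identity at index 0. -/
def blockExt {n : ℕ} (M : Matrix (Fin n) (Fin n) ℝ) : Matrix (Fin (n + 1)) (Fin (n + 1)) ℝ :=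
  fun i j =>
    if hi : i = 0 then (if j = 0 then 1 else 0)
    else if hj : j = 0 then 0 else M (i.pred hi) (j.pred hj)

lemma blockExt_mem {n : ℕ} {M : Matrix (Fin n) (Fin n) ℝ}
    (hM : M ∈ doublyStochastic ℝ (Fin n)) :
    blockExt M ∈ doublyStochastic ℝ (Fin (n + 1)) := by
  rw [mem_doublyStochastic_iff_sum] at hM ⊢
  obtain ⟨h0, hrow, hcol⟩ := hM
  refine ⟨fun i j => ?_, fun i => ?_, fun j => ?_⟩
  · unfold blockExt
    split
    · split <;> norm_num
    · split
      · exact le_refl _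
      · exact h0 _ _
  · induction i using Fin.cases with
    | zero =>
      simp only [blockExt, dif_pos rfl]
      simp
    | succ i =>
      rw [Fin.sum_univ_succ]
      simp [blockExt, Fin.succ_ne_zero, Fin.pred_succ, hrow i]
  · induction j using Fin.cases with
    | zero =>
      rw [Fin.sum_univ_succ]
      simp [blockExt, Fin.succ_ne_zero, Fin.pred_succ]
    | succ j =>
      rw [Fin.sum_univ_succ]
      simp [blockExt, Fin.succ_ne_zero, Fin.pred_succ, hcol j]

lemma blockExt_mulVec_zero {n : ℕ} (M : Matrix (Fin n) (Fin n) ℝ) (w : Fin (n + 1) → ℝ) :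
    (blockExt M *ᵥ w) 0 = w 0 := by
  simp only [mulVec, dotProduct, blockExt, dif_pos rfl, ite_mul, one_mul, zero_mul]
  simp

lemma blockExt_mulVec_succ {n : ℕ} (M : Matrix (Fin n) (Fin n) ℝ) (w : Fin (n + 1) → ℝ)
    (i : Fin n) :
    (blockExt M *ᵥ w) i.succ = (M *ᵥ (fun j => w j.succ)) i := by
  simp only [mulVec, dotProduct]
  rw [Fin.sum_univ_succ]
  have h1 : blockExt M i.succ 0 * w 0 = 0 := by
    simp [blockExt, Fin.succ_ne_zero]
  rw [h1, zero_add]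
  refine Finset.sum_congr rfl fun j _ => ?_
  have h2 : blockExt M i.succ j.succ = M i j := by
    simp [blockExt, Fin.succ_ne_zero, Fin.pred_succ]
  rw [h2]

set_option maxHeartbeats 2000000 in
lemma exists_DS : ∀ (n : ℕ) (z y : Fin n → ℝ), Antitone z → Antitone y →
    (∀ j, j ≤ n → psum z j ≤ psum y j) →
    ∃ S ∈ doublyStochastic ℝ (Fin n), ∀ i, z i ≤ (S *ᵥ y) i := by
  intro n
  induction n with
  | zero => exact fun z y _ _ _ => ⟨1, Submonoid.one_mem _, fun i => i.elim0⟩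
  | succ n IH =>
    intro z y hz hy H
    classical
    by_cases hcase : ∃ i, y i ≤ z 0
    case neg =>
      push_neg at hcase
      refine ⟨1, Submonoid.one_mem _, fun i => ?_⟩
      rw [Matrix.one_mulVec]
      exact le_of_lt (lt_of_le_of_lt (hz (Fin.zero_le i)) (hcase i))
    case pos =>
      obtain ⟨i0, hi0⟩ := hcase
      set Kset : Finset (Fin (n+1)) := Finset.univ.filter (fun i => y i ≤ z 0) with hKset
      have hKne : Kset.Nonempty := ⟨i0, by simp [hKset, hi0]⟩
      set k := Kset.min' hKne with hkdef
      have hk1 : y k ≤ z 0 := by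
        have := Kset.min'_mem hKne
        simpa [hKset] using this
      have hk2 : ∀ i : Fin (n+1), i < k → z 0 < y i := by
        intro i hik
        by_contra hcon
        push_neg at hcon
        have : k ≤ i := Kset.min'_le i (by simp [hKset, hcon])
        exact absurd hik (not_lt.2 this)
      have hz0y0 : z 0 ≤ y 0 := by
        have := H 1 (by omega)
        rwa [psum_one, psum_one] at this
      have hky0 : y k ≤ y 0 := hy (Fin.zero_le k)
      set lam : ℝ := if y 0 = y k then 1 else (z 0 - y k) / (y 0 - y k) with hlam
      have hlam0 : 0 ≤ lam := by
        rw [hlam]; split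
        · norm_num
        · next h =>
          have : y k < y 0 := lt_of_le_of_ne hky0 (Ne.symm h)
          exact div_nonneg (by linarith) (by linarith)
      have hlam1 : lam ≤ 1 := by
        rw [hlam]; split
        · norm_num
        · next h =>
          have : y k < y 0 := lt_of_le_of_ne hky0 (Ne.symm h)
          rw [div_le_one (by linarith)]
          linarith
      have hlamz : lam * y 0 + (1 - lam) * y k = z 0 := by
        rw [hlam]; split
        · next h =>
          have h1 : y 0 ≤ z 0 := by rw [h]; exact hk1
          have h2 : z 0 = y 0 := le_antisymm hz0y0 h1
          rw [h2]; ring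
        · next h =>
          have hlt : y k < y 0 := lt_of_le_of_ne hky0 (Ne.symm h)
          have hne : y 0 - y k ≠ 0 := by
            intro hcon; rw [sub_eq_zero] at hcon; exact h hcon
          field_simp
          ring
      set σk := Equiv.swap (0 : Fin (n+1)) k with hσk
      set w : Fin (n+1) → ℝ := fun i => lam * y i + (1 - lam) * y (σk i) with hw
      have hw0 : w 0 = z 0 := by
        rw [hw]
        simp only [hσk, Equiv.swap_apply_left]
        exact hlamz
      have hwk : w 0 + w k = y 0 + y k := by
        simp only [hw, hσk, Equiv.swap_apply_left, Equiv.swap_apply_right]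
        ring
      have hwi : ∀ i : Fin (n+1), i ≠ 0 → i ≠ k → w i = y i := by
        intro i h1 h2
        simp only [hw, hσk, Equiv.swap_apply_of_ne_of_ne h1 h2]
        ring
      set T : Matrix (Fin (n+1)) (Fin (n+1)) ℝ :=
        lam • (1 : Matrix (Fin (n+1)) (Fin (n+1)) ℝ) + (1 - lam) • (σk.permMatrix ℝ) with hT
      have hTmem : T ∈ doublyStochastic ℝ (Fin (n+1)) :=
        convex_doublyStochastic (Submonoid.one_mem _) permMatrix_mem_doublyStochastic
          hlam0 (by linarith) (by ring)
      have hTy : T *ᵥ y = w := by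
        funext i
        rw [hT, Matrix.add_mulVec, Matrix.smul_mulVec, Matrix.smul_mulVec,
          Matrix.one_mulVec, permMatrix_mulVec]
        simp [hw]
      have hz'anti : Antitone (fun i : Fin n => z i.succ) :=
        fun a b hab => hz (Fin.succ_le_succ_iff.mpr hab)
      set σ' := Tuple.sort (fun i : Fin n => -(w i.succ)) with hσ'
      have hvanti : Antitone (fun i : Fin n => w ((σ' i).succ)) := by
        have h := Tuple.monotone_sort (fun i : Fin n => -(w i.succ))
        intro a b hab
        have h2 := h hab
        simp only [Function.comp_apply] at h2
        simp only []
        linarith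
      have Hzw : ∀ j, j ≤ n →
          psum (fun i : Fin n => z i.succ) j ≤ psum (fun i : Fin n => w i.succ) j := by
        intro j hj
        by_cases hcasej : j + 1 ≤ (k : ℕ)
        · rw [psum, psum]
          refine Finset.sum_le_sum fun i hi => ?_
          rw [Finset.mem_range] at hi
          by_cases h : i < n
          · rw [dif_pos h, dif_pos h]
            have hisucc_lt : ((⟨i, h⟩ : Fin n).succ : Fin (n+1)) < k := by
              rw [Fin.lt_def]
              simp only [Fin.val_succ, Fin.val_mk]
              omega
            have h1 : z (⟨i, h⟩ : Fin n).succ ≤ z 0 := hz (Fin.zero_le _)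
            have h2 : z 0 < y ((⟨i, h⟩ : Fin n).succ) := hk2 _ hisucc_lt
            have h3 : w ((⟨i, h⟩ : Fin n).succ) = y ((⟨i, h⟩ : Fin n).succ) := by
              apply hwi
              · exact Fin.succ_ne_zero _
              · intro hcon
                rw [hcon] at hisucc_lt
                exact lt_irrefl _ hisucc_lt
            linarith
          · rw [dif_neg h, dif_neg h]
        · push_neg at hcasej
          have hkj : (k : ℕ) ≤ j := by omega
          have hwy : psum w (j+1) = psum y (j+1) := by
            rw [psum_eq_filter, psum_eq_filter]
            by_cases hk0 : k = 0
            · refine Finset.sum_congr rfl fun i _ => ?_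
              by_cases hi0 : i = 0
              · subst hi0
                have hyz : y 0 ≤ z 0 := hk0 ▸ hk1
                rw [hw0]
                exact le_antisymm hz0y0 hyz
              · exact hwi i hi0 (fun hcon => hi0 (hcon.trans hk0))
            · have h0k : (0 : Fin (n+1)) ≠ k := fun hcon => hk0 hcon.symm
              have hpair : ({0, k} : Finset (Fin (n+1)))
                  ⊆ Finset.univ.filter (fun i : Fin (n+1) => (i : ℕ) < j + 1) := by
                intro i hi
                simp only [Finset.mem_insert, Finset.mem_singleton] at hi
                simp only [Finset.mem_filter, Finset.mem_univ, true_and]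
                rcases hi with rfl | rfl
                · simp
                · omega
              have e1 := Finset.sum_sdiff (f := w) hpair
              have e2 := Finset.sum_sdiff (f := y) hpair
              rw [← e1, ← e2]
              congr 1
              · refine Finset.sum_congr rfl fun i hi => ?_
                rw [Finset.mem_sdiff] at hi
                have h1 : i ≠ 0 := fun hcon => hi.2 (by simp [hcon])
                have h2 : i ≠ k := fun hcon => hi.2 (by simp [hcon])
                exact hwi i h1 h2
              · rw [Finset.sum_pair h0k, Finset.sum_pair h0k]
                exact hwk
          have h1 := H (j+1) (by omega)
          have h2 := psum_shift z j
          have h3 := psum_shift w j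
          linarith [hw0]
      have Hwv : ∀ j, j ≤ n → psum (fun i : Fin n => w i.succ) j
          ≤ psum (fun i : Fin n => w ((σ' i).succ)) j := by
        intro j hj
        rw [psum_eq_filter]
        set C' := Finset.univ.filter (fun i : Fin n => (i : ℕ) < j) with hC'
        have himg : ∑ i ∈ C', w i.succ = ∑ i ∈ C'.image σ'.symm, w ((σ' i).succ) := by
          rw [Finset.sum_image (fun a _ b _ h => σ'.symm.injective h)]
          refine Finset.sum_congr rfl fun i _ => ?_
          rw [Equiv.apply_symm_apply]
        rw [himg]
        have hcard : (C'.image σ'.symm).card = j := by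
          rw [Finset.card_image_of_injective _ σ'.symm.injective, hC', card_filter_lt hj]
        calc ∑ i ∈ C'.image σ'.symm, w ((σ' i).succ)
            ≤ psum (fun i : Fin n => w ((σ' i).succ)) ((C'.image σ'.symm).card) :=
              sum_le_psum hvanti _
          _ = psum (fun i : Fin n => w ((σ' i).succ)) j := by rw [hcard]
      obtain ⟨S'', hS''mem, hS''⟩ := IH (fun i : Fin n => z i.succ)
        (fun i : Fin n => w ((σ' i).succ)) hz'anti hvanti
        (fun j hj => (Hzw j hj).trans (Hwv j hj))
      have hPv : (σ'.permMatrix ℝ) *ᵥ (fun i : Fin n => w i.succ)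
          = fun i : Fin n => w ((σ' i).succ) := permMatrix_mulVec σ' _
      have hM''mem : S'' * (σ'.permMatrix ℝ) ∈ doublyStochastic ℝ (Fin n) :=
        mul_mem hS''mem permMatrix_mem_doublyStochastic
      have hM'' : ∀ i : Fin n, z i.succ
          ≤ ((S'' * (σ'.permMatrix ℝ)) *ᵥ (fun i : Fin n => w i.succ)) i := by
        intro i
        rw [← Matrix.mulVec_mulVec, hPv]
        exact hS'' i
      refine ⟨blockExt (S'' * (σ'.permMatrix ℝ)) * T,
        mul_mem (blockExt_mem hM''mem) hTmem, fun i => ?_⟩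
      have hkey : (blockExt (S'' * (σ'.permMatrix ℝ)) * T) *ᵥ y
          = blockExt (S'' * (σ'.permMatrix ℝ)) *ᵥ w := by
        rw [← Matrix.mulVec_mulVec, hTy]
      rw [hkey]
      induction i using Fin.cases with
      | zero =>
        rw [blockExt_mulVec_zero, hw0]
      | succ i =>
        rw [blockExt_mulVec_succ]
        exact hM'' i

end WMaj

open WMaj in
/-- Weak majorization characterization (Horn–Johnson, Corollary 3.2.11): for nonincreasing
nonnegative `x, y : Fin r → ℝ`, the partial sums of `x` are dominated by those of `y` for
every `1 ≤ k ≤ r` iff `x ≤ S.mulVec y` entrywise for some doubly stochastic `S`. -/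
theorem weak_majorization_iff_doublyStochastic {r : ℕ} (x y : Fin r → ℝ)
    (hx : Antitone x) (hy : Antitone y)
    (hx0 : ∀ i, 0 ≤ x i) (hy0 : ∀ i, 0 ≤ y i) :
    (∀ (k : ℕ) (_ : 1 ≤ k) (hk : k ≤ r),
        ∑ i : Fin k, x (Fin.castLE hk i) ≤ ∑ i : Fin k, y (Fin.castLE hk i)) ↔
      ∃ S ∈ doublyStochastic ℝ (Fin r), ∀ i, x i ≤ S.mulVec y i := by
  constructor
  · intro H
    obtain ⟨S, hS, hSle⟩ := exists_DS r x y hx hy (fun j hj => by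
      rcases Nat.eq_zero_or_pos j with rfl | hj1
      · simp [psum]
      · rw [← sum_castLE x hj, ← sum_castLE y hj]
        exact H j hj1 hj)
    exact ⟨S, hS, hSle⟩
  · rintro ⟨S, hS, hle⟩ k hk1 hk
    classical
    obtain ⟨h0, hrow, hcol⟩ := mem_doublyStochastic_iff_sum.mp hS
    set F : Finset (Fin r) := Finset.univ.filter (fun i : Fin r => (i : ℕ) < k) with hF
    set c : Fin r → ℝ := fun j => ∑ i ∈ F, S i j with hc
    have hc0 : ∀ j, 0 ≤ c j := fun j => Finset.sum_nonneg fun i _ => h0 i j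
    have hc1 : ∀ j, c j ≤ 1 := by
      intro j
      calc c j ≤ ∑ i : Fin r, S i j :=
            Finset.sum_le_sum_of_subset_of_nonneg (Finset.subset_univ F)
              (fun i _ _ => h0 i j)
        _ = 1 := hcol j
    have hFcard : F.card = k := card_filter_lt hk
    have hcsum : ∑ j, c j = (k : ℝ) := by
      rw [hc]
      rw [Finset.sum_comm]
      have : ∀ i ∈ F, ∑ j, S i j = (1 : ℝ) := fun i _ => hrow i
      rw [Finset.sum_congr rfl this, Finset.sum_const, hFcard, nsmul_eq_mul, mul_one]
    have hkr : k - 1 < r := by omega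
    set t : ℝ := y ⟨k - 1, hkr⟩ with ht
    have hty : ∀ j ∈ F, t ≤ y j := by
      intro j hj
      rw [hF, Finset.mem_filter] at hj
      refine hy ?_
      rw [Fin.le_def]
      simp only [Fin.val_mk]
      omega
    have htY : ∀ j : Fin r, j ∉ F → y j ≤ t := by
      intro j hj
      rw [hF, Finset.mem_filter] at hj
      simp only [Finset.mem_univ, true_and] at hj
      push_neg at hj
      refine hy ?_
      rw [Fin.le_def]
      simp only [Fin.val_mk]
      omega
    have key : ∀ j : Fin r, c j * y j ≤ (if (j : ℕ) < k then y j - t else 0) + c j * t := by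
      intro j
      by_cases hj : (j : ℕ) < k
      · rw [if_pos hj]
        have hjF : j ∈ F := by rw [hF]; simp [hj]
        have h1 : t ≤ y j := hty j hjF
        nlinarith [mul_nonneg (sub_nonneg.2 (hc1 j)) (sub_nonneg.2 h1)]
      · rw [if_neg hj]
        have hjF : j ∉ F := by rw [hF]; simp [hj]
        have h1 : y j ≤ t := htY j hjF
        have := mul_le_mul_of_nonneg_left h1 (hc0 j)
        linarith
    calc ∑ i : Fin k, x (Fin.castLE hk i)
        ≤ ∑ i : Fin k, (S *ᵥ y) (Fin.castLE hk i) := Finset.sum_le_sum fun i _ => hle _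
      _ = ∑ i ∈ F, (S *ᵥ y) i := by rw [sum_castLE _ hk, psum_eq_filter]
      _ = ∑ j, c j * y j := by
          simp only [mulVec, dotProduct]
          rw [Finset.sum_comm]
          refine Finset.sum_congr rfl fun j _ => ?_
          rw [hc, ← Finset.sum_mul]
      _ ≤ ∑ j : Fin r, ((if (j : ℕ) < k then y j - t else 0) + c j * t) :=
          Finset.sum_le_sum fun j _ => key j
      _ = ∑ i ∈ F, (y i - t) + (∑ j, c j) * t := by
          rw [Finset.sum_add_distrib, Finset.sum_mul]
          congr 1
          rw [hF, Finset.sum_filter]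
      _ = ∑ i ∈ F, y i := by
          rw [hcsum, Finset.sum_sub_distrib, Finset.sum_const, hFcard, nsmul_eq_mul]
          ring
      _ = ∑ i : Fin k, y (Fin.castLE hk i) := by rw [sum_castLE _ hk, psum_eq_filter]
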